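/- Let T be a rooted binary tree with n leaves, height k = ⌈log₂ n⌉, and exactly n − 2^{k−1} cherries at maximal depth k. Then T has minimal Sackin index among all rooted binary trees with n leaves. -/

import Mathlib

/-- Rooted binary trees: a single node (leaf) or a root with two subtrees. -/
inductive BTree : Type
  | leaf : BTree
  | node : BTree → BTree → BTree

namespace BTree

/-- Number of leaves of a rooted binary tree. -/
def leaves : BTree → ℕ
  | leaf => 1
  | node l r => l.leaves + r.leaves

/-- Sum of depths of all leaves, where the root of the tree is at depth `d`. -/
def sackinAux : BTree → ℕ → ℕ
  | leaf, d => d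
  | node l r, d => sackinAux l (d + 1) + sackinAux r (d + 1)

/-- Sackin index: the sum of the depths of all leaves. -/
def sackin (t : BTree) : ℕ := sackinAux t 0

/-- Sum, over all internal nodes `u`, of the number of leaves below `u`. -/
def internalLeafSum : BTree → ℕ
  | leaf => 0
  | node l r => (l.leaves + r.leaves) + internalLeafSum l + internalLeafSum r

/-- Sum, over all nodes `v`, of the number of leaves below `v`. -/
def allNodesLeafSum : BTree → ℕ
  | leaf => 1
  | node l r => (l.leaves + r.leaves) + allNodesLeafSum l + allNodesLeafSum r

/-- Sum, over all non-root nodes `v`, of the number of leaves below `v`. -/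
def nonRootLeafSum : BTree → ℕ
  | leaf => 0
  | node l r => allNodesLeafSum l + allNodesLeafSum r

/-- Height: maximal number of edges on a root-to-leaf path. -/
def height : BTree → ℕ
  | leaf => 0
  | node l r => max l.height r.height + 1

/-- Subtree at a given path from the root (`false` = left child, `true` = right child). -/
def subtreeAt : BTree → List Bool → Option BTree
  | t, [] => some t
  | leaf, _ :: _ => none
  | node l _, false :: p => subtreeAt l p
  | node _ r, true :: p => subtreeAt r p

/-- Number of cherries (pairs of sibling leaves) whose two leaves are at depth `d`. -/
def cherriesAt : BTree → ℕ → ℕ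
  | leaf, _ => 0
  | node leaf leaf, d => if d = 1 then 1 else 0
  | node _ _, 0 => 0
  | node l r, d + 1 => cherriesAt l d + cherriesAt r d

/-- `DeleteCherry t d t'` : `t'` is obtained from `t` by deleting a cherry `[u,v]`
(both leaves at depth `d`) together with the two pendant edges, turning the
parent `w` into a leaf. -/
inductive DeleteCherry : BTree → ℕ → BTree → Prop
  | base : DeleteCherry (BTree.node BTree.leaf BTree.leaf) 1 BTree.leaf
  | left {l l' r : BTree} {d : ℕ} :
      DeleteCherry l d l' → DeleteCherry (BTree.node l r) (d + 1) (BTree.node l' r)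
  | right {l r r' : BTree} {d : ℕ} :
      DeleteCherry r d r' → DeleteCherry (BTree.node l r) (d + 1) (BTree.node l r')

/-- Caterpillar tree with `n` leaves (for `n ≥ 1`): the unique rooted binary tree
with exactly one cherry. -/
def caterpillar : ℕ → BTree
  | 0 => BTree.leaf
  | 1 => BTree.leaf
  | n + 2 => BTree.node (caterpillar (n + 1)) BTree.leaf

/-- Fully balanced tree of height `k`, with `2^k` leaves all at depth `k`. -/
def balanced : ℕ → BTree
  | 0 => BTree.leaf
  | k + 1 => BTree.node (balanced k) (balanced k)

/-- Isomorphism of rooted binary trees (children are unordered). -/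
inductive Iso : BTree → BTree → Prop
  | leaf : Iso BTree.leaf BTree.leaf
  | node {a b c d : BTree} : Iso a c → Iso b d → Iso (BTree.node a b) (BTree.node c d)
  | swap {a b c d : BTree} : Iso a d → Iso b c → Iso (BTree.node a b) (BTree.node c d)

end BTree

open BTree

/-- Minimal depth of a leaf. -/
def BTree.minDepth : BTree → ℕ
  | .leaf => 0
  | .node l r => min l.minDepth r.minDepth + 1

lemma leaves_pos (t : BTree) : 1 ≤ t.leaves := by
  induction t with
  | leaf => simp [leaves]
  | node l r ihl ihr => simp [leaves]; omega

lemma sackinAux_add (t : BTree) : ∀ d, sackinAux t d = t.sackin + d * t.leaves := by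
  induction t with
  | leaf => intro d; simp [sackinAux, sackin, leaves]
  | node l r ihl ihr =>
    intro d
    show sackinAux l (d + 1) + sackinAux r (d + 1)
      = (sackinAux l (0 + 1) + sackinAux r (0 + 1)) + d * (l.leaves + r.leaves)
    rw [ihl (d + 1), ihr (d + 1), ihl (0 + 1), ihr (0 + 1)]
    ring

/-- The minimal-Sackin value, as an integer. -/
def Fz (n : ℕ) : ℤ := n * (Nat.clog 2 n + 1) - 2 ^ (Nat.clog 2 n)

lemma Fz_mono_bound (a j : ℕ) (ha : 1 ≤ a) (hj : Nat.clog 2 a ≤ j) :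
    (a : ℤ) * (j + 1) - 2 ^ j ≤ Fz a := by
  induction j, hj using Nat.le_induction with
  | base => exact le_of_eq rfl
  | succ j hj ih =>
    have h1 : a ≤ 2 ^ Nat.clog 2 a := Nat.le_pow_clog (by norm_num) a
    have h2 : (2 : ℕ) ^ Nat.clog 2 a ≤ 2 ^ j := Nat.pow_le_pow_right (by norm_num) hj
    have h3 : (a : ℤ) ≤ 2 ^ j := by exact_mod_cast h1.trans h2
    have h4 : (2 : ℤ) ^ (j + 1) = 2 * 2 ^ j := by ring
    push_cast
    push_cast at ih
    nlinarith

lemma Fz_superadd_aux (a b : ℕ) (ha : 1 ≤ a) (hb : 1 ≤ b) (hab : a ≤ b) :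
    Fz (a + b) ≤ Fz a + Fz b + a + b := by
  set n := a + b with hn
  set k := Nat.clog 2 n with hkdef
  have h2 : 2 ≤ n := by omega
  have hk : 1 ≤ k := Nat.clog_pos (by norm_num) h2
  obtain ⟨j, hj⟩ : ∃ j, k = j + 1 := ⟨k - 1, by omega⟩
  have hn2k : n ≤ 2 ^ k := Nat.le_pow_clog (by norm_num) n
  have haj : a ≤ 2 ^ j := by
    have : 2 * a ≤ 2 ^ k := by omega
    rw [hj, pow_succ] at this; omega
  have hka : Nat.clog 2 a ≤ j := (Nat.clog_le_iff_le_pow (by norm_num)).mpr haj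
  have hFa : (a : ℤ) * (j + 1) - 2 ^ j ≤ Fz a := Fz_mono_bound a j ha hka
  have hFn : Fz n = (n : ℤ) * (k + 1) - 2 ^ k := rfl
  by_cases hbj : b ≤ 2 ^ j
  · have hkb : Nat.clog 2 b ≤ j := (Nat.clog_le_iff_le_pow (by norm_num)).mpr hbj
    have hFb : (b : ℤ) * (j + 1) - 2 ^ j ≤ Fz b := Fz_mono_bound b j hb hkb
    rw [hFn, hj]
    have hcast : (n : ℤ) = a + b := by exact_mod_cast hn
    have h2p : (2 : ℤ) ^ (j + 1) = 2 * 2 ^ j := by ring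
    push_cast
    push_cast at hFa hFb
    nlinarith
  · have hkb : Nat.clog 2 b ≤ k := Nat.clog_mono_right 2 (by omega)
    have hkb2 : k ≤ Nat.clog 2 b := by
      rw [hj]
      by_contra hlt
      exact hbj ((Nat.clog_le_iff_le_pow (by norm_num)).mp (by omega))
    have hkbe : Nat.clog 2 b = k := le_antisymm hkb hkb2
    have hFb : Fz b = (b : ℤ) * (k + 1) - 2 ^ k := by rw [Fz, hkbe]
    rw [hFn, hFb, hj]
    have hcast : (n : ℤ) = a + b := by exact_mod_cast hn
    have h2p : (2 : ℤ) ^ (j + 1) = 2 * 2 ^ j := by ring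
    have hb' : (2:ℤ) ^ j ≤ b := by exact_mod_cast Nat.le_of_not_le hbj
    push_cast
    push_cast at hFa
    nlinarith

lemma Fz_superadd (a b : ℕ) (ha : 1 ≤ a) (hb : 1 ≤ b) :
    Fz (a + b) ≤ Fz a + Fz b + a + b := by
  rcases le_total a b with h | h
  · exact Fz_superadd_aux a b ha hb h
  · have := Fz_superadd_aux b a hb ha h
    rw [Nat.add_comm b a] at this
    push_cast at this ⊢
    linarith

/-- Lower bound: every tree's Sackin index is at least `Fz` of its leaf count. -/
lemma sackin_lower (t : BTree) : Fz t.leaves ≤ (t.sackin : ℤ) := by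
  induction t with
  | leaf =>
    show Fz 1 ≤ ((0 : ℕ) : ℤ)
    norm_num [Fz, Nat.clog_one_right]
  | node l r ihl ihr =>
    have hs : (BTree.node l r).sackin = l.sackin + l.leaves + (r.sackin + r.leaves) := by
      show sackinAux l (0 + 1) + sackinAux r (0 + 1) = _
      rw [sackinAux_add l (0 + 1), sackinAux_add r (0 + 1)]
      ring
    have hsup := Fz_superadd l.leaves r.leaves (leaves_pos l) (leaves_pos r)
    have hleq : (BTree.node l r).leaves = l.leaves + r.leaves := rfl
    rw [hleq, hs]
    push_cast
    linarith

lemma cherriesAt_node' (l r : BTree) (d : ℕ) (h : ¬(l = BTree.leaf ∧ r = BTree.leaf)) :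
    cherriesAt (BTree.node l r) (d + 1) = cherriesAt l d + cherriesAt r d := by
  cases l <;> cases r <;> simp [cherriesAt] at h ⊢

lemma height_le_zero {t : BTree} (h : t.height = 0) : t = BTree.leaf := by
  cases t with
  | leaf => rfl
  | node l r => simp [height] at h

lemma two_leaves_le (t : BTree) : ∀ k, 1 ≤ k → t.height ≤ k →
    2 * t.leaves ≤ 2 ^ k + 2 * cherriesAt t k := by
  induction t with
  | leaf =>
    intro k hk _
    have : (2:ℕ) ^ 1 ≤ 2 ^ k := Nat.pow_le_pow_right (by norm_num) hk
    simp [leaves, cherriesAt]; omega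
  | node l r ihl ihr =>
    intro k hk hh
    obtain ⟨j, rfl⟩ := Nat.exists_eq_succ_of_ne_zero (by omega : k ≠ 0)
    have hhl : l.height ≤ j := by simp [height] at hh; omega
    have hhr : r.height ≤ j := by simp [height] at hh; omega
    by_cases hll : l = BTree.leaf ∧ r = BTree.leaf
    · obtain ⟨rfl, rfl⟩ := hll
      have : (2:ℕ) ^ 1 ≤ 2 ^ (j+1) := Nat.pow_le_pow_right (by norm_num) (by omega)
      have hch : cherriesAt (BTree.node BTree.leaf BTree.leaf) (j + 1)
          = if j + 1 = 1 then 1 else 0 := rfl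
      rcases Nat.eq_zero_or_pos j with rfl | hj
      · simp [hch, leaves]
      · have h4 : (2:ℕ) ^ 2 ≤ 2 ^ (j+1) := Nat.pow_le_pow_right (by norm_num) (by omega)
        rw [hch, if_neg (by omega : ¬ j + 1 = 1)]
        simp [leaves]; omega
    · rw [cherriesAt_node' l r j hll]
      rcases Nat.eq_zero_or_pos j with rfl | hj
      · exfalso
        apply hll
        exact ⟨height_le_zero (by omega), height_le_zero (by omega)⟩
      · have h1 := ihl j hj hhl
        have h2 := ihr j hj hhr
        simp only [leaves, pow_succ]
        omega

lemma two_leaves_add_two_le (t : BTree) : ∀ k, 1 ≤ k → t.height ≤ k →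
    t.minDepth + 2 ≤ k → 2 * t.leaves + 2 ≤ 2 ^ k + 2 * cherriesAt t k := by
  induction t with
  | leaf =>
    intro k _ _ hm
    simp [BTree.minDepth] at hm
    have : (2:ℕ) ^ 2 ≤ 2 ^ k := Nat.pow_le_pow_right (by norm_num) hm
    simp [leaves, cherriesAt]; omega
  | node l r ihl ihr =>
    intro k hk hh hm
    obtain ⟨j, rfl⟩ := Nat.exists_eq_succ_of_ne_zero (by omega : k ≠ 0)
    have hhl : l.height ≤ j := by simp [height] at hh; omega
    have hhr : r.height ≤ j := by simp [height] at hh; omega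
    have hmj : min l.minDepth r.minDepth + 2 ≤ j := by
      simp [BTree.minDepth] at hm; omega
    have hj2 : 2 ≤ j := by omega
    by_cases hll : l = BTree.leaf ∧ r = BTree.leaf
    · obtain ⟨rfl, rfl⟩ := hll
      have hch : cherriesAt (BTree.node BTree.leaf BTree.leaf) (j + 1)
          = if j + 1 = 1 then 1 else 0 := rfl
      have : (2:ℕ) ^ 3 ≤ 2 ^ (j+1) := Nat.pow_le_pow_right (by norm_num) (by omega)
      rw [hch, if_neg (by omega : ¬ j + 1 = 1)]
      simp [leaves]; omega
    · rw [cherriesAt_node' l r j hll]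
      rcases le_total l.minDepth r.minDepth with hlr | hlr
      · have h1 := ihl j (by omega) hhl (by omega)
        have h2 := two_leaves_le r j (by omega) hhr
        simp only [leaves, pow_succ]
        omega
      · have h1 := ihr j (by omega) hhr (by omega)
        have h2 := two_leaves_le l j (by omega) hhl
        simp only [leaves, pow_succ]
        omega

lemma sackin_of_balancedish (t : BTree) : ∀ k, t.height ≤ k → k ≤ t.minDepth + 1 →
    (t.sackin : ℤ) = t.leaves * (k + 1) - 2 ^ k := by
  induction t with
  | leaf =>
    intro k _ hm
    simp [BTree.minDepth] at hm
    interval_cases k <;> norm_num [sackin, sackinAux, leaves]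
  | node l r ihl ihr =>
    intro k hh hm
    have hk : 1 ≤ k := by simp [height] at hh; omega
    obtain ⟨j, rfl⟩ := Nat.exists_eq_succ_of_ne_zero (by omega : k ≠ 0)
    have hhl : l.height ≤ j := by simp [height] at hh; omega
    have hhr : r.height ≤ j := by simp [height] at hh; omega
    have hml : j ≤ l.minDepth + 1 := by simp [BTree.minDepth] at hm; omega
    have hmr : j ≤ r.minDepth + 1 := by simp [BTree.minDepth] at hm; omega
    have h1 := ihl j hhl hml
    have h2 := ihr j hhr hmr
    have hs : (BTree.node l r).sackin = l.sackin + l.leaves + (r.sackin + r.leaves) := by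
      show sackinAux l (0 + 1) + sackinAux r (0 + 1) = _
      rw [sackinAux_add l (0 + 1), sackinAux_add r (0 + 1)]
      ring
    have hleq : (BTree.node l r).leaves = l.leaves + r.leaves := rfl
    rw [hs, hleq]
    simp only [Nat.succ_eq_add_one]
    have hp : (2:ℤ) ^ (j + 1) = 2 * 2 ^ j := by ring
    push_cast
    push_cast at h1 h2
    nlinarith [hp]

/-- a tree with `n` leaves, height `k = ⌈log₂ n⌉` and exactly
`n − 2^{k−1}` cherries at depth `k` has minimal Sackin index. -/
theorem stmt15 (t : BTree)
    (hh : t.height = Nat.clog 2 t.leaves)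
    (hc : cherriesAt t (Nat.clog 2 t.leaves)
            = t.leaves - 2 ^ (Nat.clog 2 t.leaves - 1)) :
    ∀ t' : BTree, t'.leaves = t.leaves → t.sackin ≤ t'.sackin := by
  intro t' ht'
  have h1 : 1 ≤ t.leaves := leaves_pos t
  by_cases hn : t.leaves = 1
  · have h0 : t.height = 0 := by rw [hh, hn, Nat.clog_one_right]
    have : t = BTree.leaf := height_le_zero h0
    subst this
    exact Nat.zero_le _
  · set n := t.leaves with hndef
    set k := Nat.clog 2 n with hkdef
    have h2 : 2 ≤ n := by omega
    have hk : 1 ≤ k := Nat.clog_pos (by norm_num) h2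
    obtain ⟨j, hj⟩ : ∃ j, k = j + 1 := ⟨k - 1, by omega⟩
    have hlt : 2 ^ j < n := by
      by_contra hle
      have : k ≤ j := (Nat.clog_le_iff_le_pow (by norm_num)).mpr (by omega)
      omega
    have hc' : cherriesAt t k = n - 2 ^ j := by
      have hkj : k - 1 = j := by omega
      rw [hc, hkj]
    have hmind : k ≤ t.minDepth + 1 := by
      by_contra hcon
      have hE := two_leaves_add_two_le t k hk (le_of_eq hh) (by omega)
      rw [hc', hj, pow_succ] at hE
      omega
    have hB := sackin_of_balancedish t k (le_of_eq hh) hmind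
    have hA := sackin_lower t'
    rw [ht'] at hA
    have hFn : Fz n = (n : ℤ) * (k + 1) - 2 ^ k := rfl
    have : (t.sackin : ℤ) ≤ (t'.sackin : ℤ) := by rw [hB]; rw [hFn] at hA; linarith
    exact_mod_cast this
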